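/- Let p and q be probability measures on a measurable space X. Then sup over measurable D : X → (0, 1) of ( ∫ log(D) dp + ∫ log(1 − D) dq ) = −2·log 2 + 2·JSD(p, q). -/

import Mathlib

open MeasureTheory Real
open scoped ENNReal

open Real

lemma aux_mul_log_le (a t : ℝ) (ha : 0 ≤ a) (ht : 0 < t) :
    a * log t ≤ a * log a - a * log 2 + (2*t - a) := by
  rcases ha.eq_or_lt with h | h
  · simp [← h]; positivity
  · have h1 : log (2*t/a) ≤ 2*t/a - 1 := log_le_sub_one_of_pos (by positivity)
    have h2 : log (2*t/a) = log 2 + log t - log a := by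
      rw [log_div (by positivity) h.ne', log_mul two_ne_zero ht.ne']
    have h3 : a * (log 2 + log t - log a) ≤ a * (2*t/a - 1) := by
      apply mul_le_mul_of_nonneg_left _ ha; linarith [h1, h2]
    have h4 : a * (2*t/a - 1) = 2*t - a := by field_simp
    nlinarith [h3, h4]

lemma aux_abs_mul_log_le {x : ℝ} (h0 : 0 ≤ x) (h2 : x ≤ 2) : |x * log x| ≤ 2 := by
  rcases le_or_gt x 1 with hx | hx
  · rcases h0.eq_or_lt with h | h
    · simp [← h]
    · have hlog : log x ≤ 0 := log_nonpos h0 hx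
      have h1 : log x⁻¹ ≤ x⁻¹ - 1 := log_le_sub_one_of_pos (by positivity)
      have h2' : x * log x⁻¹ ≤ x * (x⁻¹ - 1) := mul_le_mul_of_nonneg_left h1 h0
      have h3 : x * (x⁻¹ - 1) = 1 - x := by field_simp
      rw [log_inv] at h2'
      rw [abs_of_nonpos (mul_nonpos_of_nonneg_of_nonpos h0 hlog)]
      nlinarith
  · have hl0 : 0 ≤ log x := log_nonneg hx.le
    have hle : log x ≤ 1 := by
      have := log_le_sub_one_of_pos (show (0:ℝ) < x by linarith)
      linarith
    rw [abs_of_nonneg (by positivity)]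
    nlinarith


/-- The Kullback–Leibler divergence `KL(p ‖ q) = ∫ log (dp/dq) dp`. -/
noncomputable def klDiv {X : Type*} [MeasurableSpace X] (p q : Measure X) : ℝ :=
  ∫ x, log ((p.rnDeriv q x).toReal) ∂p

/-- The Jensen–Shannon divergence
`JSD(p, q) = (1/2)·KL(p ‖ m) + (1/2)·KL(q ‖ m)` with `m = (1/2)(p + q)`. -/
noncomputable def jsd {X : Type*} [MeasurableSpace X] (p q : Measure X) : ℝ :=
  (1 / 2) * klDiv p ((2 : ℝ≥0∞)⁻¹ • (p + q)) + (1 / 2) * klDiv q ((2 : ℝ≥0∞)⁻¹ • (p + q))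

/-- The supremum over measurable discriminators `D : X → (0,1)` of the adversarial
objective `∫ log D dp + ∫ log (1 - D) dq` equals `-2·log 2 + 2·JSD(p, q)`. -/
theorem adversarial_objective_sup_eq_jsd {X : Type*} [MeasurableSpace X]
    (p q : Measure X) [IsProbabilityMeasure p] [IsProbabilityMeasure q] :
    sSup {r : ℝ | ∃ D : X → ℝ, Measurable D ∧ (∀ x, D x ∈ Set.Ioo (0 : ℝ) 1) ∧
        Integrable (fun x => log (D x)) p ∧ Integrable (fun x => log (1 - D x)) q ∧
        r = (∫ x, log (D x) ∂p) + (∫ x, log (1 - D x) ∂q)} =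
      -2 * log 2 + 2 * jsd p q := by
  set m : Measure X := (2 : ℝ≥0∞)⁻¹ • (p + q) with hm
  have hm2 : (2 : ℝ≥0∞) • m = p + q := by
    rw [hm, smul_smul, ENNReal.mul_inv_cancel two_ne_zero ENNReal.ofNat_ne_top, one_smul]
  haveI hmP : IsProbabilityMeasure m := by
    constructor
    rw [hm, Measure.smul_apply, Measure.add_apply, measure_univ, measure_univ, smul_eq_mul]
    rw [one_add_one_eq_two, ENNReal.inv_mul_cancel two_ne_zero ENNReal.ofNat_ne_top]
  have hpm : p ≪ m := by
    rw [hm]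
    exact (Measure.absolutelyContinuous_of_le (Measure.le_add_right le_rfl)).trans
      (Measure.absolutelyContinuous_smul (by simp))
  have hqm : q ≪ m := by
    rw [hm]
    exact (Measure.absolutelyContinuous_of_le (Measure.le_add_left le_rfl)).trans
      (Measure.absolutelyContinuous_smul (by simp))
  have hsum : ∀ᵐ x ∂m, p.rnDeriv m x + q.rnDeriv m x = 2 := by
    have h1 := Measure.rnDeriv_add' p q m
    have h2 := Measure.rnDeriv_smul_left_of_ne_top m m (r := 2) ENNReal.ofNat_ne_top
    have h3 := Measure.rnDeriv_self m
    rw [hm2] at h2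
    filter_upwards [h1, h2, h3] with x h1 h2 h3
    have := h1.symm.trans h2
    simp only [Pi.add_apply, Pi.smul_apply, h3, smul_eq_mul, mul_one] at this
    exact this
  set F : X → ℝ := fun x => (p.rnDeriv m x).toReal with hF
  set G : X → ℝ := fun x => (q.rnDeriv m x).toReal with hG
  have hFmeas : Measurable F := (Measure.measurable_rnDeriv p m).ennreal_toReal
  have hGmeas : Measurable G := (Measure.measurable_rnDeriv q m).ennreal_toReal
  have hF0 : ∀ x, 0 ≤ F x := fun x => ENNReal.toReal_nonneg
  have hG0 : ∀ x, 0 ≤ G x := fun x => ENNReal.toReal_nonneg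
  have hsumR : ∀ᵐ x ∂m, F x + G x = 2 := by
    filter_upwards [hsum, Measure.rnDeriv_lt_top p m, Measure.rnDeriv_lt_top q m] with x h hp hq
    rw [hF, hG]
    rw [← ENNReal.toReal_add hp.ne hq.ne, h]
    simp
  have hF2 : ∀ᵐ x ∂m, F x ≤ 2 := by
    filter_upwards [hsumR] with x h; linarith [hG0 x]
  have hG2 : ∀ᵐ x ∂m, G x ≤ 2 := by
    filter_upwards [hsumR] with x h; linarith [hF0 x]
  have hIntF : ∫ x, F x ∂m = 1 := by
    rw [hF, integral_toReal (Measure.measurable_rnDeriv p m).aemeasurable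
      (Measure.rnDeriv_lt_top p m), Measure.lintegral_rnDeriv hpm, measure_univ,
      ENNReal.toReal_one]
  have hIntG : ∫ x, G x ∂m = 1 := by
    rw [hG, integral_toReal (Measure.measurable_rnDeriv q m).aemeasurable
      (Measure.rnDeriv_lt_top q m), Measure.lintegral_rnDeriv hqm, measure_univ,
      ENNReal.toReal_one]
  have hFint : Integrable F m := (integrable_const (2:ℝ)).mono' hFmeas.aestronglyMeasurable
    (by filter_upwards [hF2] with x h; rw [norm_eq_abs, abs_of_nonneg (hF0 x)]; exact h)
  have hGint : Integrable G m := (integrable_const (2:ℝ)).mono' hGmeas.aestronglyMeasurable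
    (by filter_upwards [hG2] with x h; rw [norm_eq_abs, abs_of_nonneg (hG0 x)]; exact h)
  have hFlogF : Integrable (fun x => F x * log (F x)) m :=
    (integrable_const (2:ℝ)).mono'
      (hFmeas.mul (Real.measurable_log.comp hFmeas)).aestronglyMeasurable
      (by filter_upwards [hF2] with x h; rw [norm_eq_abs]; exact aux_abs_mul_log_le (hF0 x) h)
  have hGlogG : Integrable (fun x => G x * log (G x)) m :=
    (integrable_const (2:ℝ)).mono'
      (hGmeas.mul (Real.measurable_log.comp hGmeas)).aestronglyMeasurable
      (by filter_upwards [hG2] with x h; rw [norm_eq_abs]; exact aux_abs_mul_log_le (hG0 x) h)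
  have hlogFp : Integrable (fun x => log (F x)) p := by
    rw [← MeasureTheory.integrable_rnDeriv_smul_iff hpm]
    simpa [smul_eq_mul] using hFlogF
  have hlogGq : Integrable (fun x => log (G x)) q := by
    rw [← MeasureTheory.integrable_rnDeriv_smul_iff hqm]
    simpa [smul_eq_mul] using hGlogG
  have htransP : ∀ h : X → ℝ, ∫ x, F x * h x ∂m = ∫ x, h x ∂p := fun h => by
    rw [← MeasureTheory.integral_rnDeriv_smul hpm]; rfl
  have htransQ : ∀ h : X → ℝ, ∫ x, G x * h x ∂m = ∫ x, h x ∂q := fun h => by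
    rw [← MeasureTheory.integral_rnDeriv_smul hqm]; rfl
  have hFposP : ∀ᵐ x ∂p, 0 < F x := by
    filter_upwards [Measure.rnDeriv_pos hpm, hpm.ae_le (Measure.rnDeriv_lt_top p m)] with x h1 h2
    exact ENNReal.toReal_pos h1.ne' h2.ne
  have hGposQ : ∀ᵐ x ∂q, 0 < G x := by
    filter_upwards [Measure.rnDeriv_pos hqm, hqm.ae_le (Measure.rnDeriv_lt_top q m)] with x h1 h2
    exact ENNReal.toReal_pos h1.ne' h2.ne

  -- Upper bound
  have hUB : ∀ D : X → ℝ, Measurable D → (∀ x, D x ∈ Set.Ioo (0 : ℝ) 1) →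
      Integrable (fun x => log (D x)) p → Integrable (fun x => log (1 - D x)) q →
      (∫ x, log (D x) ∂p) + (∫ x, log (1 - D x) ∂q) ≤
        (∫ x, log (F x) ∂p) + (∫ x, log (G x) ∂q) - 2 * log 2 := by
    intro D hDmeas hD hIDp hIDq
    have hFlogD : Integrable (fun x => F x * log (D x)) m := by
      have := (MeasureTheory.integrable_rnDeriv_smul_iff hpm).mpr hIDp
      simpa [smul_eq_mul] using this
    have hGlog1D : Integrable (fun x => G x * log (1 - D x)) m := by
      have := (MeasureTheory.integrable_rnDeriv_smul_iff hqm).mpr hIDq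
      simpa [smul_eq_mul] using this
    have hDint : Integrable D m := (integrable_const (1:ℝ)).mono' hDmeas.aestronglyMeasurable
      (ae_of_all _ fun x => by
        rw [norm_eq_abs, abs_of_nonneg (hD x).1.le]; exact (hD x).2.le)
    set L : X → ℝ := fun x => F x * log (D x) + G x * log (1 - D x) with hL
    set R : X → ℝ := fun x =>
        (F x * log (F x) - F x * log 2 + (2 * D x - F x)) +
        (G x * log (G x) - G x * log 2 + (2 - 2 * D x - G x)) with hR
    have hLint : Integrable L m := hFlogD.add hGlog1D
    have hA1 : Integrable (fun x => F x * log 2) m := hFint.mul_const _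
    have hA : Integrable (fun x => F x * log (F x) - F x * log 2) m := hFlogF.sub hA1
    have hB1 : Integrable (fun x => 2 * D x) m := hDint.const_mul 2
    have hB : Integrable (fun x => 2 * D x - F x) m := hB1.sub hFint
    have hAB : Integrable (fun x => F x * log (F x) - F x * log 2 + (2 * D x - F x)) m := hA.add hB
    have hC1 : Integrable (fun x => G x * log 2) m := hGint.mul_const _
    have hC : Integrable (fun x => G x * log (G x) - G x * log 2) m := hGlogG.sub hC1
    have hD1 : Integrable (fun x => 2 - 2 * D x) m := (integrable_const 2).sub hB1
    have hD2 : Integrable (fun x => 2 - 2 * D x - G x) m := hD1.sub hGint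
    have hCD : Integrable (fun x => G x * log (G x) - G x * log 2 + (2 - 2 * D x - G x)) m :=
      hC.add hD2
    have hRint : Integrable R m := hAB.add hCD
    have hLR : ∀ᵐ x ∂m, L x ≤ R x := by
      refine ae_of_all _ fun x => ?_
      have h1 := aux_mul_log_le (F x) (D x) (hF0 x) (hD x).1
      have h2 := aux_mul_log_le (G x) (1 - D x) (hG0 x) (by linarith [(hD x).2])
      simp only [hL, hR]
      nlinarith [h1, h2]
    have key := integral_mono_ae hLint hRint hLR
    have eL : ∫ x, L x ∂m = (∫ x, log (D x) ∂p) + (∫ x, log (1 - D x) ∂q) := by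
      rw [hL, integral_add hFlogD hGlog1D, htransP (fun x => log (D x)),
        htransQ (fun x => log (1 - D x))]
    have eR : ∫ x, R x ∂m = (∫ x, log (F x) ∂p) + (∫ x, log (G x) ∂q) - 2 * log 2 := by
      have i1 : ∫ x, (F x * log (F x) - F x * log 2 + (2 * D x - F x)) ∂m
          = (∫ x, F x * log (F x) ∂m) - log 2 + (2 * (∫ x, D x ∂m) - 1) := by
        rw [integral_add hA hB, integral_sub hFlogF hA1, integral_sub hB1 hFint,
          integral_mul_const, integral_const_mul, hIntF]
        ring
      have i2 : ∫ x, (G x * log (G x) - G x * log 2 + (2 - 2 * D x - G x)) ∂m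
          = (∫ x, G x * log (G x) ∂m) - log 2 + (2 - 2 * (∫ x, D x ∂m) - 1) := by
        rw [integral_add hC hD2, integral_sub hGlogG hC1, integral_sub hD1 hGint,
          integral_sub (integrable_const (2:ℝ)) hB1,
          integral_mul_const, integral_const_mul, hIntG, integral_const, probReal_univ]
        simp only [ENNReal.toReal_one, one_smul, smul_eq_mul, one_mul]
      rw [hR, integral_add hAB hCD, i1, i2, htransP (fun x => log (F x)),
        htransQ (fun x => log (G x))]
      ring
    rw [eL, eR] at key
    exact key

  -- Lower bound
  have hLB : ∀ δ : ℝ, 0 < δ → ∃ D : X → ℝ, Measurable D ∧ (∀ x, D x ∈ Set.Ioo (0 : ℝ) 1) ∧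
      Integrable (fun x => log (D x)) p ∧ Integrable (fun x => log (1 - D x)) q ∧
      (∫ x, log (F x) ∂p) + (∫ x, log (G x) ∂q) - 2 * log 2 - δ ≤
        (∫ x, log (D x) ∂p) + (∫ x, log (1 - D x) ∂q) := by
    intro δ hδ
    have hF2P : ∀ᵐ x ∂p, F x ≤ 2 := hpm.ae_le hF2
    have hsumQ : ∀ᵐ x ∂q, F x + G x = 2 := hqm.ae_le hsumR
    set ε : ℝ := (1 - exp (-(δ/2)))/2 with hε
    have hexp1 : exp (-(δ/2)) < 1 := exp_lt_one_iff.mpr (by linarith)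
    have hexp0 : 0 < exp (-(δ/2)) := exp_pos _
    have hε0 : 0 < ε := by rw [hε]; linarith
    have hεhalf : ε < 1/2 := by rw [hε]; linarith
    have h12ε : 1 - 2*ε = exp (-(δ/2)) := by rw [hε]; ring
    have h12ε0 : 0 < 1 - 2*ε := by rw [h12ε]; exact hexp0
    have hlog12ε : log (1 - 2*ε) = -(δ/2) := by rw [h12ε, log_exp]
    set D : X → ℝ := fun x => ε + (1 - 2*ε) * min (F x / 2) 1 with hD
    have hmin0 : ∀ x, 0 ≤ min (F x / 2) 1 := fun x => le_min (by linarith [hF0 x]) one_pos.le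
    have hmin1 : ∀ x, min (F x / 2) 1 ≤ 1 := fun x => min_le_right _ _
    have hDlb : ∀ x, ε ≤ D x := fun x => by
      rw [hD]; simp only; nlinarith [hmin0 x]
    have hDub : ∀ x, D x ≤ 1 - ε := fun x => by
      rw [hD]; simp only; nlinarith [hmin1 x]
    have hDmem : ∀ x, D x ∈ Set.Ioo (0:ℝ) 1 :=
      fun x => ⟨lt_of_lt_of_le hε0 (hDlb x), by linarith [hDub x]⟩
    have hDmeas : Measurable D :=
      measurable_const.add (((hFmeas.div_const 2).min measurable_const).const_mul _)
    have hε1 : ε < 1 := by linarith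
    have hlogεle : log ε ≤ 0 := log_nonpos hε0.le hε1.le
    have hIlogDp : Integrable (fun x => log (D x)) p :=
      (integrable_const (-log ε)).mono'
        ((Real.measurable_log.comp hDmeas).aestronglyMeasurable)
        (ae_of_all _ fun x => by
          rw [norm_eq_abs, abs_le]
          constructor
          · simpa using log_le_log hε0 (hDlb x)
          · have : log (D x) ≤ 0 := log_nonpos (hDmem x).1.le (by linarith [hDub x])
            linarith)
    have h1Dlb : ∀ x, ε ≤ 1 - D x := fun x => by linarith [hDub x]
    have h1Dub : ∀ x, 1 - D x ≤ 1 - ε := fun x => by linarith [hDlb x]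
    have hIlog1Dq : Integrable (fun x => log (1 - D x)) q :=
      (integrable_const (-log ε)).mono'
        ((Real.measurable_log.comp (measurable_const.sub hDmeas)).aestronglyMeasurable)
        (ae_of_all _ fun x => by
          rw [norm_eq_abs, abs_le]
          constructor
          · simpa using log_le_log hε0 (h1Dlb x)
          · have : log (1 - D x) ≤ 0 := log_nonpos (by linarith [h1Dlb x]) (by linarith [h1Dub x])
            linarith)
    refine ⟨D, hDmeas, hDmem, hIlogDp, hIlog1Dq, ?_⟩
    -- pointwise bounds
    have hptP : ∀ᵐ x ∂p, log (F x) - (log 2 + δ/2) ≤ log (D x) := by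
      filter_upwards [hFposP, hF2P] with x hx1 hx2
      have hmin : min (F x / 2) 1 = F x / 2 := min_eq_left (by linarith)
      have hDge : (1 - 2*ε) * (F x / 2) ≤ D x := by
        rw [hD]; simp only [hmin]; linarith
      have hpos : 0 < (1 - 2*ε) * (F x / 2) := by positivity
      have := log_le_log hpos hDge
      rw [log_mul h12ε0.ne' (by positivity), log_div hx1.ne' two_ne_zero, hlog12ε] at this
      linarith
    have hptQ : ∀ᵐ x ∂q, log (G x) - (log 2 + δ/2) ≤ log (1 - D x) := by
      filter_upwards [hGposQ, hsumQ] with x hx1 hx2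
      have hmin : min (F x / 2) 1 = F x / 2 := min_eq_left (by nlinarith [hG0 x])
      have hDeq : D x = ε + (1 - 2*ε) * (F x / 2) := by rw [hD]; simp only [hmin]
      have hFeq : F x = 2 - G x := by linarith
      have hDge : (1 - 2*ε) * (G x / 2) ≤ 1 - D x := by
        rw [hDeq, hFeq]; nlinarith [hε0]
      have hpos : 0 < (1 - 2*ε) * (G x / 2) := by positivity
      have := log_le_log hpos hDge
      rw [log_mul h12ε0.ne' (by positivity), log_div hx1.ne' two_ne_zero, hlog12ε] at this
      linarith
    have hIp : Integrable (fun x => log (F x) - (log 2 + δ/2)) p :=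
      hlogFp.sub (integrable_const _)
    have hIq : Integrable (fun x => log (G x) - (log 2 + δ/2)) q :=
      hlogGq.sub (integrable_const _)
    have k1 := integral_mono_ae hIp hIlogDp hptP
    have k2 := integral_mono_ae hIq hIlog1Dq hptQ
    rw [integral_sub hlogFp (integrable_const _), integral_const, probReal_univ] at k1
    rw [integral_sub hlogGq (integrable_const _), integral_const, probReal_univ] at k2
    simp only [ENNReal.toReal_one, one_smul, smul_eq_mul, one_mul] at k1 k2
    linarith

  -- Conclusion
  have hT : -2 * log 2 + 2 * jsd p q
      = (∫ x, log (F x) ∂p) + (∫ x, log (G x) ∂q) - 2 * log 2 := by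
    simp only [jsd, klDiv, hF, hG, hm]
    ring
  rw [hT]
  have hne : Set.Nonempty {r : ℝ | ∃ D : X → ℝ, Measurable D ∧ (∀ x, D x ∈ Set.Ioo (0 : ℝ) 1) ∧
      Integrable (fun x => log (D x)) p ∧ Integrable (fun x => log (1 - D x)) q ∧
      r = (∫ x, log (D x) ∂p) + (∫ x, log (1 - D x) ∂q)} := by
    refine ⟨_, ⟨fun _ => 1/2, measurable_const, by norm_num, integrable_const _,
      by norm_num, rfl⟩⟩
  have hbdd : BddAbove {r : ℝ | ∃ D : X → ℝ, Measurable D ∧ (∀ x, D x ∈ Set.Ioo (0 : ℝ) 1) ∧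
      Integrable (fun x => log (D x)) p ∧ Integrable (fun x => log (1 - D x)) q ∧
      r = (∫ x, log (D x) ∂p) + (∫ x, log (1 - D x) ∂q)} := by
    refine ⟨(∫ x, log (F x) ∂p) + (∫ x, log (G x) ∂q) - 2 * log 2, ?_⟩
    rintro r ⟨D, h1, h2, h3, h4, rfl⟩
    exact hUB D h1 h2 h3 h4
  apply le_antisymm
  · apply csSup_le hne
    rintro r ⟨D, h1, h2, h3, h4, rfl⟩
    exact hUB D h1 h2 h3 h4
  · refine le_of_forall_pos_le_add fun δ hδ => ?_
    obtain ⟨D, h1, h2, h3, h4, h5⟩ := hLB δ hδ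
    have hmem : ((∫ x, log (D x) ∂p) + (∫ x, log (1 - D x) ∂q)) ∈
        {r : ℝ | ∃ D : X → ℝ, Measurable D ∧ (∀ x, D x ∈ Set.Ioo (0 : ℝ) 1) ∧
        Integrable (fun x => log (D x)) p ∧ Integrable (fun x => log (1 - D x)) q ∧
        r = (∫ x, log (D x) ∂p) + (∫ x, log (1 - D x) ∂q)} := ⟨D, h1, h2, h3, h4, rfl⟩
    have := le_csSup hbdd hmem
    linarith
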